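/- For every d ≥ 1, m ≥ 1, any pairwise distinct points s_1, …, s_m ∈ ℝ^d, and any values G_1, …, G_m ∈ ℝ, there exist vectors w_1, …, w_m ∈ ℝ^d and real numbers a_1, …, a_m, c_1, …, c_m, b such that Σ_{j=1}^m a_j · max(0, ⟨w_j, s_i⟩ + c_j) + b = G_i for every i = 1, …, m. That is, a one-hidden-layer neural network with m ReLU activation units and a bias term at the output layer exactly interpolates the data {(s_i, G_i)}. -/

import Mathlib

/-- Interpolation on a finite set of reals by a sum of ReLU units indexed by the set itself. -/
lemma relu_interp (S : Finset ℝ) (g : ℝ → ℝ) :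
    ∃ (a c : ℝ → ℝ) (b : ℝ), ∀ x ∈ S,
      (∑ y ∈ S, a y * max 0 (x + c y)) + b = g x := by
  induction S using Finset.strongInduction with
  | _ S ih =>
    rcases S.eq_empty_or_nonempty with rfl | hS
    · exact ⟨0, 0, 0, by simp⟩
    · set M := S.max' hS with hM
      have hMS : M ∈ S := S.max'_mem hS
      set E := S.erase M with hE
      obtain ⟨a, c, b, h⟩ := ih E (Finset.erase_ssubset hMS)
      -- choose threshold t with (∀ x ∈ E, x < t) and t < M
      obtain ⟨t, ht1, ht2⟩ : ∃ t : ℝ, (∀ x ∈ E, x < t) ∧ t < M := by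
        rcases E.eq_empty_or_nonempty with hEe | hEn
        · exact ⟨M - 1, by simp [hEe], by linarith⟩
        · refine ⟨(E.max' hEn + M) / 2, ?_, ?_⟩
          · intro x hx
            have h1 : x ≤ E.max' hEn := E.le_max' x hx
            have h2 : E.max' hEn < M := by
              have hmem := E.max'_mem hEn
              have hne : E.max' hEn ≠ M := (Finset.mem_erase.mp hmem).1
              have hle : E.max' hEn ≤ M := S.le_max' _ (Finset.mem_erase.mp hmem).2
              exact lt_of_le_of_ne hle hne
            linarith
          · have h2 : E.max' hEn < M := by
              have hmem := E.max'_mem hEn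
              have hne : E.max' hEn ≠ M := (Finset.mem_erase.mp hmem).1
              have hle : E.max' hEn ≤ M := S.le_max' _ (Finset.mem_erase.mp hmem).2
              exact lt_of_le_of_ne hle hne
            linarith
      set A := g M - ((∑ y ∈ E, a y * max 0 (M + c y)) + b) with hA
      refine ⟨Function.update a M (A / (M - t)), Function.update c M (-t), b, ?_⟩
      have hsplit : ∀ x : ℝ,
          (∑ y ∈ S, Function.update a M (A / (M - t)) y *
            max 0 (x + Function.update c M (-t) y)) =
          (A / (M - t)) * max 0 (x - t) + ∑ y ∈ E, a y * max 0 (x + c y) := by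
        intro x
        rw [← Finset.insert_erase hMS, Finset.sum_insert (Finset.notMem_erase M S),
          Function.update_self, Function.update_self, ← sub_eq_add_neg]
        congr 1
        apply Finset.sum_congr rfl
        intro y hy
        have hyM : y ≠ M := (Finset.mem_erase.mp hy).1
        rw [Function.update_of_ne hyM, Function.update_of_ne hyM]
      intro x hx
      rw [hsplit]
      rcases eq_or_ne x M with rfl | hxM
      · have hpos : (0 : ℝ) < M - t := by linarith
        have : max 0 (M - t) = M - t := max_eq_right hpos.le
        rw [this, div_mul_cancel₀ _ (ne_of_gt hpos), hA]
        ring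
      · have hxE : x ∈ E := Finset.mem_erase.mpr ⟨hxM, hx⟩
        have hxt : x < t := ht1 x hxE
        have : max 0 (x - t) = 0 := max_eq_left (by linarith)
        rw [this, mul_zero, zero_add]
        exact h x hxE

theorem stmt_9
    (d m : ℕ) (hd : 0 < d) (hm : 0 < m)
    (s : Fin m → EuclideanSpace ℝ (Fin d))
    (hs : ∀ i j : Fin m, i ≠ j → s i ≠ s j)
    (G : Fin m → ℝ) :
    ∃ (w : Fin m → EuclideanSpace ℝ (Fin d)) (a c : Fin m → ℝ) (b : ℝ),
      ∀ i : Fin m,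
        (∑ j, a j * max 0 (inner ℝ (w j) (s i) + c j)) + b = G i := by
  -- find a separating vector w₀
  have hsep : ∃ w₀ : EuclideanSpace ℝ (Fin d),
      Function.Injective (fun i : Fin m => (inner ℝ w₀ (s i) : ℝ)) := by
    set ι := {p : Fin m × Fin m // p.1 ≠ p.2}
    by_cases hι : Nonempty ι
    · set p : ι → Subspace ℝ (EuclideanSpace ℝ (Fin d)) :=
        fun q => LinearMap.ker (innerSL ℝ (s q.1.1 - s q.1.2) : _ →L[ℝ] ℝ).toLinearMap
      have hne : ∀ q, p q ≠ ⊤ := by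
        intro q hq
        have hv : s q.1.1 - s q.1.2 ≠ 0 := sub_ne_zero.mpr (hs _ _ q.2)
        have : (s q.1.1 - s q.1.2) ∈ p q := hq ▸ Submodule.mem_top
        simp only [p, LinearMap.mem_ker, ContinuousLinearMap.coe_coe, innerSL_apply_apply] at this
        exact hv (inner_self_eq_zero.mp this)
      have hcover : ⋃ q, ((p q : Set (EuclideanSpace ℝ (Fin d)))) ≠ Set.univ := by
        intro hc
        obtain ⟨q, hq⟩ := Subspace.exists_eq_top_of_iUnion_eq_univ hc
        exact hne q hq
      obtain ⟨w₀, hw₀⟩ : ∃ w₀, w₀ ∉ ⋃ q, ((p q : Set (EuclideanSpace ℝ (Fin d)))) := by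
        by_contra hcon
        push_neg at hcon
        exact hcover (Set.eq_univ_of_forall fun w => Set.mem_iUnion.mpr
          (Set.mem_iUnion.mp (hcon w)))
      refine ⟨w₀, ?_⟩
      intro i j hij
      by_contra hne'
      have hq : w₀ ∉ (p ⟨(i, j), hne'⟩ : Set (EuclideanSpace ℝ (Fin d))) := by
        intro hmem
        exact hw₀ (Set.mem_iUnion.mpr ⟨_, hmem⟩)
      apply hq
      simp only [p, SetLike.mem_coe, LinearMap.mem_ker, ContinuousLinearMap.coe_coe,
        innerSL_apply_apply, inner_sub_left]
      have h2 : (inner ℝ w₀ (s i) : ℝ) = inner ℝ w₀ (s j) := hij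
      rw [real_inner_comm w₀ (s i), real_inner_comm w₀ (s j), h2]
      ring
    · refine ⟨0, fun i j hij => ?_⟩
      by_contra hne'
      exact hι ⟨⟨(i, j), hne'⟩⟩
  obtain ⟨w₀, hw₀⟩ := hsep
  set x : Fin m → ℝ := fun i => inner ℝ w₀ (s i) with hxdef
  set S : Finset ℝ := Finset.image x Finset.univ with hSdef
  obtain ⟨a, c, b, h⟩ := relu_interp S (Function.extend x G 0)
  refine ⟨fun _ => w₀, fun j => a (x j), fun j => c (x j), b, ?_⟩
  intro i
  have hxS : x i ∈ S := Finset.mem_image_of_mem x (Finset.mem_univ i)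
  have := h (x i) hxS
  rw [hw₀.extend_apply] at this
  rw [← this, hSdef, Finset.sum_image (fun u _ v _ huv => hw₀ huv)]
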